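/- Let θ > 1/2 and τ, σ > 0 satisfy τσ ≥ 4/(1 + 2θ). Then the discriminant τσ(τσ(1+θ)² − 4) is nonnegative, and the two real eigenvalues λ₁ = (2 − τσ(1+θ) + √(τσ(τσ(1+θ)² − 4)))/2 and λ₂ = (2 − τσ(1+θ) − √(τσ(τσ(1+θ)² − 4)))/2 of the 2×2 real matrix M = [[1, −τ], [σ, 1 − τσ(1+θ)]] satisfy λ₂ ≤ −1 and λ₂ < λ₁ < 1; in particular, M has an eigenvalue of magnitude at least 1. -/
import Mathlib


open scoped RealInnerProductSpace
open Filter Topology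

noncomputable section

/-- The convex subdifferential of an extended-real-valued function:
`∂f(x) = { u : ∀ z, f z ≥ f x + ⟪u, z - x⟫ }`. -/
def ESubdiff {E : Type*} [NormedAddCommGroup E] [InnerProductSpace ℝ E]
    (f : E → EReal) (x : E) : Set E :=
  {u | ∀ z : E, f x + ((⟪u, z - x⟫ : ℝ) : EReal) ≤ f z}

/-- Properness of an extended-real-valued function: it never takes the value `⊥`
and is not identically `⊤`. -/
def EProper {E : Type*} (f : E → EReal) : Prop :=
  (∃ x, f x ≠ ⊤) ∧ ∀ x, f x ≠ ⊥

/-- Convexity of an extended-real-valued function. -/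
def EConvex {E : Type*} [NormedAddCommGroup E] [NormedSpace ℝ E] (f : E → EReal) : Prop :=
  ∀ x y : E, ∀ a b : ℝ, 0 ≤ a → 0 ≤ b → a + b = 1 →
    f (a • x + b • y) ≤ (a : EReal) * f x + (b : EReal) * f y

/-- The convex (Fenchel) conjugate `g*(y) = sup_x (⟪x, y⟫ - g x)`. -/
def EConj {E : Type*} [NormedAddCommGroup E] [InnerProductSpace ℝ E]
    (g : E → EReal) (y : E) : EReal :=
  ⨆ x : E, ((⟪x, y⟫ : ℝ) : EReal) - g x

/-- `IsProx τ f x p` states that `p = prox_{τ f}(x)`, i.e. `p` minimizes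
`fun z => f z + (1/(2τ)) ‖z - x‖²`. -/
def IsProx {E : Type*} [NormedAddCommGroup E] [InnerProductSpace ℝ E]
    (τ : ℝ) (f : E → EReal) (x p : E) : Prop :=
  ∀ z : E, f p + ((1 / (2 * τ) * ‖p - x‖ ^ 2 : ℝ) : EReal)
      ≤ f z + ((1 / (2 * τ) * ‖z - x‖ ^ 2 : ℝ) : EReal)

/-- The Lagrangian `𝓛(x, y) = f x + ⟪y, L x⟫ - g*(y)` of the saddle-point problem. -/
def Lagr {E F : Type*} [NormedAddCommGroup E] [InnerProductSpace ℝ E]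
    [NormedAddCommGroup F] [InnerProductSpace ℝ F]
    (f : E → EReal) (gs : F → EReal) (L : E →L[ℝ] F) (x : E) (y : F) : EReal :=
  f x + ((⟪y, L x⟫ : ℝ) : EReal) - gs y

set_option maxHeartbeats 1000000 in
theorem counterexample_eigenvalues
    (θ τ σ : ℝ) (hθ : 1 / 2 < θ) (hτ : 0 < τ) (hσ : 0 < σ)
    (hstep : 4 / (1 + 2 * θ) ≤ τ * σ)
    :
    0 ≤ τ * σ * (τ * σ * (1 + θ) ^ 2 - 4) ∧
    Module.End.HasEigenvalue
      (Matrix.toLin' (!![1, -τ; σ, 1 - τ * σ * (1 + θ)] : Matrix (Fin 2) (Fin 2) ℝ))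
      ((2 - τ * σ * (1 + θ) + Real.sqrt (τ * σ * (τ * σ * (1 + θ) ^ 2 - 4))) / 2) ∧
    Module.End.HasEigenvalue
      (Matrix.toLin' (!![1, -τ; σ, 1 - τ * σ * (1 + θ)] : Matrix (Fin 2) (Fin 2) ℝ))
      ((2 - τ * σ * (1 + θ) - Real.sqrt (τ * σ * (τ * σ * (1 + θ) ^ 2 - 4))) / 2) ∧
    (2 - τ * σ * (1 + θ) - Real.sqrt (τ * σ * (τ * σ * (1 + θ) ^ 2 - 4))) / 2 ≤ -1 ∧
    (2 - τ * σ * (1 + θ) - Real.sqrt (τ * σ * (τ * σ * (1 + θ) ^ 2 - 4))) / 2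
      < (2 - τ * σ * (1 + θ) + Real.sqrt (τ * σ * (τ * σ * (1 + θ) ^ 2 - 4))) / 2 ∧
    (2 - τ * σ * (1 + θ) + Real.sqrt (τ * σ * (τ * σ * (1 + θ) ^ 2 - 4))) / 2 < 1 ∧
    ∃ μ : ℝ, Module.End.HasEigenvalue
      (Matrix.toLin' (!![1, -τ; σ, 1 - τ * σ * (1 + θ)] : Matrix (Fin 2) (Fin 2) ℝ)) μ ∧
      1 ≤ |μ| := by
  have hθ0 : (0:ℝ) < 1 + 2 * θ := by linarith
  have hs0 : 0 < τ * σ := mul_pos hτ hσ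
  have hs4 : 4 ≤ τ * σ * (1 + 2 * θ) := by
    rw [div_le_iff₀ hθ0] at hstep; linarith
  have hDpos : 0 < τ * σ * (τ * σ * (1 + θ) ^ 2 - 4) := by
    nlinarith [mul_pos hs0 (mul_pos (by linarith : (0:ℝ) < θ) (by linarith : (0:ℝ) < θ))]
  have hD : 0 ≤ τ * σ * (τ * σ * (1 + θ) ^ 2 - 4) := hDpos.le
  set r := Real.sqrt (τ * σ * (τ * σ * (1 + θ) ^ 2 - 4)) with hrdef
  have hr2 : r ^ 2 = τ * σ * (τ * σ * (1 + θ) ^ 2 - 4) := Real.sq_sqrt hD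
  have hrpos : 0 < r := Real.sqrt_pos.2 hDpos
  have heig : ∀ lam : ℝ,
      lam ^ 2 - (2 - τ * σ * (1 + θ)) * lam + (1 - τ * σ * θ) = 0 →
      Module.End.HasEigenvalue
        (Matrix.toLin' (!![1, -τ; σ, 1 - τ * σ * (1 + θ)] : Matrix (Fin 2) (Fin 2) ℝ)) lam := by
    intro lam hlam
    apply Module.End.hasEigenvalue_of_hasEigenvector (x := ![τ, 1 - lam])
    constructor
    · rw [Module.End.mem_eigenspace_iff]
      funext i
      fin_cases i <;>
        simp [Matrix.toLin'_apply, Matrix.mulVec, dotProduct, Fin.sum_univ_two] <;>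
        nlinarith [hlam]
    · intro h
      have := congrFun h 0
      simp at this
      exact hτ.ne' this
  have hc1 : ((2 - τ * σ * (1 + θ) + r) / 2) ^ 2
      - (2 - τ * σ * (1 + θ)) * ((2 - τ * σ * (1 + θ) + r) / 2) + (1 - τ * σ * θ) = 0 := by
    nlinarith [hr2]
  have hc2 : ((2 - τ * σ * (1 + θ) - r) / 2) ^ 2
      - (2 - τ * σ * (1 + θ)) * ((2 - τ * σ * (1 + θ) - r) / 2) + (1 - τ * σ * θ) = 0 := by
    nlinarith [hr2]
  have hkey : 4 - τ * σ * (1 + θ) ≤ r := by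
    rcases le_or_gt (4 - τ * σ * (1 + θ)) 0 with h | h
    · linarith [hrpos]
    · have : (4 - τ * σ * (1 + θ)) ^ 2 ≤ τ * σ * (τ * σ * (1 + θ) ^ 2 - 4) := by nlinarith [hs4]
      nlinarith [hr2, hrpos]
  have hlt1 : r < τ * σ * (1 + θ) := by
    have h1 : τ * σ * (τ * σ * (1 + θ) ^ 2 - 4) < (τ * σ * (1 + θ)) ^ 2 := by nlinarith
    nlinarith [hr2, hrpos]
  refine ⟨hD, heig _ (by linarith [hc1]), heig _ (by linarith [hc2]), by linarith, by linarith,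
    by linarith, ⟨(2 - τ * σ * (1 + θ) - r) / 2, heig _ (by linarith [hc2]), ?_⟩⟩
  rw [abs_of_nonpos (by linarith)]
  linarith
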